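/- Let D₁, D₂ ⊆ ℝᵐ be open and y : D₁ → ℝⁿ, z : D₂ → ℝⁿ be solutions of the PDE system ∂x/∂t^α = X_α(t,x) with C¹ right-hand sides. If D₁ ∩ D₂ is connected and y(t₀) = z(t₀) for some t₀ ∈ D₁ ∩ D₂, then y = z on D₁ ∩ D₂. -/

import Mathlib

open Matrix

open Set Metric Filter Topology NNReal in
/-- Local uniqueness: if the two solutions agree at an interior point, they agree nearby. -/
theorem solutions_agree_local {m n : ℕ}
    (G : Set ((Fin m → ℝ) × (Fin n → ℝ))) (hG : IsOpen G)
    (X : Fin m → ((Fin m → ℝ) × (Fin n → ℝ)) → (Fin n → ℝ))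
    (hX : ∀ α, ContDiffOn ℝ 1 (X α) G)
    (D₁ D₂ : Set (Fin m → ℝ)) (hD₁ : IsOpen D₁) (hD₂ : IsOpen D₂)
    (y z : (Fin m → ℝ) → (Fin n → ℝ))
    (hy : ∀ t ∈ D₁, DifferentiableAt ℝ y t ∧ (t, y t) ∈ G ∧
      ∀ α, fderiv ℝ y t (Pi.single α 1) = X α (t, y t))
    (hz : ∀ t ∈ D₂, DifferentiableAt ℝ z t ∧ (t, z t) ∈ G ∧
      ∀ α, fderiv ℝ z t (Pi.single α 1) = X α (t, z t))
    (t : Fin m → ℝ) (ht : t ∈ D₁ ∩ D₂) (heq : y t = z t) :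
    ∀ᶠ s in 𝓝 t, y s = z s := by
  classical
  obtain ⟨ht1, ht2⟩ := ht
  obtain ⟨hyd, hyG, hyX⟩ := hy t ht1
  -- Lipschitz neighborhoods for each X α at (t, y t)
  have hlip : ∀ α : Fin m, ∃ K : ℝ≥0, ∃ U ∈ 𝓝 (t, y t), LipschitzOnWith K (X α) U := fun α =>
    ((hX α).contDiffAt (hG.mem_nhds hyG)).exists_lipschitzOnWith
  choose K U hU hKU using hlip
  have hUall : (⋂ α, U α) ∈ 𝓝 (t, y t) := Filter.iInter_mem.2 hU
  obtain ⟨ε, hε, hball⟩ := Metric.mem_nhds_iff.1 hUall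
  set K₀ : ℝ≥0 := Finset.univ.sup K with hK₀
  have hKle : ∀ α, K α ≤ K₀ := fun α => Finset.le_sup (Finset.mem_univ α)
  -- choose δ
  have hW : {s | (s ∈ D₁ ∧ s ∈ D₂) ∧ dist (y s) (y t) < ε ∧ dist (z s) (y t) < ε} ∈ 𝓝 t := by
    have h1 : ∀ᶠ s in 𝓝 t, s ∈ D₁ ∧ s ∈ D₂ := by
      filter_upwards [(hD₁.inter hD₂).mem_nhds ⟨ht1, ht2⟩] with s hs using hs
    have h2 : ∀ᶠ s in 𝓝 t, dist (y s) (y t) < ε :=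
      hyd.continuousAt (Metric.ball_mem_nhds _ hε)
    have h3 : ∀ᶠ s in 𝓝 t, dist (z s) (y t) < ε := by
      have := (hz t ht2).1.continuousAt (x := t) (Metric.ball_mem_nhds (z t) hε)
      filter_upwards [this] with s hs
      simpa [heq] using hs
    filter_upwards [h1, h2, h3] with s hs1 hs2 hs3 using ⟨hs1, hs2, hs3⟩
  obtain ⟨δ₀, hδ₀, hballW⟩ := Metric.mem_nhds_iff.1 hW
  set δ : ℝ := min δ₀ ε with hδdef
  have hδ : 0 < δ := lt_min hδ₀ hε
  have hδε : δ ≤ ε := min_le_right _ _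
  have hδδ₀ : δ ≤ δ₀ := min_le_left _ _
  -- main claim: y = z on ball t (δ/2)
  have main : ∀ s ∈ Metric.ball t (δ / 2), y s = z s := by
    intro s hs
    set w : Fin m → ℝ := s - t with hw
    set γ : ℝ → (Fin m → ℝ) := fun u => t + u • w with hγ
    have hγ0 : γ 0 = t := by simp [hγ]
    have hγ1 : γ 1 = s := by simp [hγ, hw]
    have hγmem : ∀ u ∈ Set.Ioo (-2 : ℝ) 2, γ u ∈ Metric.ball t δ := by
      intro u hu
      have : dist (γ u) t = |u| * ‖w‖ := by
        simp [hγ, dist_eq_norm, norm_smul, Real.norm_eq_abs]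
      rw [Metric.mem_ball, this]
      have h1 : |u| ≤ 2 := abs_le.2 ⟨hu.1.le, hu.2.le⟩
      have h2 : ‖w‖ < δ / 2 := by
        have := Metric.mem_ball.1 hs
        rwa [dist_eq_norm] at this
      calc |u| * ‖w‖ ≤ 2 * ‖w‖ := by
            exact mul_le_mul_of_nonneg_right h1 (norm_nonneg _)
        _ < 2 * (δ / 2) := by nlinarith [norm_nonneg w]
        _ = δ := by ring
    have hγW : ∀ u ∈ Set.Ioo (-2 : ℝ) 2,
        (γ u ∈ D₁ ∧ γ u ∈ D₂) ∧ dist (y (γ u)) (y t) < ε ∧ dist (z (γ u)) (y t) < ε := by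
      intro u hu
      exact hballW (Metric.ball_subset_ball hδδ₀ (hγmem u hu))
    -- the common ODE
    set v : ℝ → (Fin n → ℝ) → (Fin n → ℝ) := fun u x => ∑ α, w α • X α (γ u, x) with hv
    set sset : ℝ → Set (Fin n → ℝ) := fun u => {x | (γ u, x) ∈ Metric.ball (t, y t) ε}
      with hsset
    set K' : ℝ≥0 := K₀ * ∑ α, ‖w α‖₊ with hK'
    have hslice : ∀ u : ℝ, ∀ x ∈ sset u, ∀ α, (γ u, x) ∈ U α := by
      intro u x hx α
      exact Set.mem_iInter.1 (hball hx) α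
    have hlipv : ∀ u : ℝ, LipschitzOnWith K' (v u) (sset u) := by
      intro u
      rw [lipschitzOnWith_iff_dist_le_mul]
      intro x hx x' hx'
      have hterm : ∀ α : Fin m,
          dist (X α (γ u, x)) (X α (γ u, x')) ≤ (K₀ : ℝ) * dist x x' := by
        intro α
        have := (hKU α).dist_le_mul (x := (γ u, x)) (y := (γ u, x'))
          (hslice u x hx α) (hslice u x' hx' α)
        have hd : dist ((γ u, x) : (Fin m → ℝ) × (Fin n → ℝ)) (γ u, x') = dist x x' := by
          rw [Prod.dist_eq]
          simp only [dist_self]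
          exact max_eq_right dist_nonneg
        rw [hd] at this
        calc dist (X α (γ u, x)) (X α (γ u, x')) ≤ (K α : ℝ) * dist x x' := this
          _ ≤ (K₀ : ℝ) * dist x x' := by
              exact mul_le_mul_of_nonneg_right (by exact_mod_cast hKle α) dist_nonneg
      calc dist (v u x) (v u x') = ‖∑ α, w α • (X α (γ u, x) - X α (γ u, x'))‖ := by
            rw [dist_eq_norm, hv]
            congr 1
            rw [← Finset.sum_sub_distrib]
            exact Finset.sum_congr rfl fun α _ => (smul_sub _ _ _).symm
        _ ≤ ∑ α, ‖w α • (X α (γ u, x) - X α (γ u, x'))‖ := norm_sum_le _ _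
        _ ≤ ∑ α, ‖w α‖ * ((K₀ : ℝ) * dist x x') := by
            apply Finset.sum_le_sum
            intro α _
            rw [norm_smul]
            exact mul_le_mul_of_nonneg_left (by rw [← dist_eq_norm]; exact hterm α)
              (norm_nonneg _)
        _ = (∑ α, ‖w α‖) * ((K₀ : ℝ) * dist x x') := by rw [← Finset.sum_mul]
        _ = (K' : ℝ) * dist x x' := by
            have hcoe : (K' : ℝ) = (K₀ : ℝ) * ∑ α, ‖w α‖ := by
              simp [hK']
            rw [hcoe]; ring
    have hγ' : ∀ u : ℝ, HasDerivAt γ w u := by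
      intro u
      have h1 : HasDerivAt (fun u : ℝ => u • w) w u := by
        simpa using (hasDerivAt_id u).smul_const w
      simpa [hγ] using h1.const_add t
    have hwsum : w = ∑ α, w α • (Pi.single α 1 : Fin m → ℝ) := by
      funext j
      simp only [Finset.sum_apply, Pi.smul_apply, Pi.single_apply, smul_eq_mul,
        mul_ite, mul_one, mul_zero]
      simp
    -- derivative of solutions along γ
    have hkey : ∀ (F : (Fin m → ℝ) → (Fin n → ℝ)), ∀ u : ℝ, γ u ∈ D₁ ∪ D₂ →
        DifferentiableAt ℝ F (γ u) →
        (∀ α, fderiv ℝ F (γ u) (Pi.single α 1) = X α (γ u, F (γ u))) →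
        HasDerivAt (F ∘ γ) (v u ((F ∘ γ) u)) u := by
      intro F u _ hFd hFX
      have hcomp : HasDerivAt (F ∘ γ) (fderiv ℝ F (γ u) w) u :=
        hFd.hasFDerivAt.comp_hasDerivAt u (hγ' u)
      have : fderiv ℝ F (γ u) w = v u (F (γ u)) := by
        conv_lhs => rw [hwsum]
        rw [map_sum]
        simp only [ContinuousLinearMap.map_smul, hFX]
        rfl
      rwa [this] at hcomp
    have hz0 : (0 : ℝ) ∈ Set.Ioo (-2 : ℝ) 2 := by norm_num
    have h1mem : (1 : ℝ) ∈ Set.Ioo (-2 : ℝ) 2 := by norm_num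
    have hyODE : ∀ u ∈ Set.Ioo (-2 : ℝ) 2,
        HasDerivAt (y ∘ γ) (v u ((y ∘ γ) u)) u ∧ (y ∘ γ) u ∈ sset u := by
      intro u hu
      obtain ⟨⟨hd1, hd2⟩, hy2, hz2⟩ := hγW u hu
      obtain ⟨ha, hb, hc⟩ := hy (γ u) hd1
      refine ⟨hkey y u (Or.inl hd1) ha hc, ?_⟩
      simp only [hsset, Set.mem_setOf_eq, Metric.mem_ball, Prod.dist_eq]
      exact max_lt (lt_of_lt_of_le (Metric.mem_ball.1 (hγmem u hu)) hδε) hy2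
    have hzODE : ∀ u ∈ Set.Ioo (-2 : ℝ) 2,
        HasDerivAt (z ∘ γ) (v u ((z ∘ γ) u)) u ∧ (z ∘ γ) u ∈ sset u := by
      intro u hu
      obtain ⟨⟨hd1, hd2⟩, hy2, hz2⟩ := hγW u hu
      obtain ⟨ha, hb, hc⟩ := hz (γ u) hd2
      refine ⟨hkey z u (Or.inr hd2) ha hc, ?_⟩
      simp only [hsset, Set.mem_setOf_eq, Metric.mem_ball, Prod.dist_eq]
      exact max_lt (lt_of_lt_of_le (Metric.mem_ball.1 (hγmem u hu)) hδε) hz2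
    have heq0 : (y ∘ γ) 0 = (z ∘ γ) 0 := by simp [hγ0, heq]
    have := ODE_solution_unique_of_mem_Ioo (fun u _ => hlipv u) hz0 hyODE hzODE heq0 h1mem
    simpa [hγ1] using this
  filter_upwards [Metric.ball_mem_nhds t (by positivity : (0:ℝ) < δ / 2)] with s hs
  exact main s hs

/-- Two solutions of a first-order PDE system with `C¹` right-hand sides, agreeing at one
point of a connected intersection of their domains, agree on the whole intersection. -/
theorem solutions_agree_on_connected_intersection {m n : ℕ}
    (G : Set ((Fin m → ℝ) × (Fin n → ℝ))) (hG : IsOpen G)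
    (X : Fin m → ((Fin m → ℝ) × (Fin n → ℝ)) → (Fin n → ℝ))
    (hX : ∀ α, ContDiffOn ℝ 1 (X α) G)
    (D₁ D₂ : Set (Fin m → ℝ)) (hD₁ : IsOpen D₁) (hD₂ : IsOpen D₂)
    (y z : (Fin m → ℝ) → (Fin n → ℝ))
    (hy : ∀ t ∈ D₁, DifferentiableAt ℝ y t ∧ (t, y t) ∈ G ∧
      ∀ α, fderiv ℝ y t (Pi.single α 1) = X α (t, y t))
    (hz : ∀ t ∈ D₂, DifferentiableAt ℝ z t ∧ (t, z t) ∈ G ∧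
      ∀ α, fderiv ℝ z t (Pi.single α 1) = X α (t, z t))
    (hconn : IsConnected (D₁ ∩ D₂))
    (t₀ : Fin m → ℝ) (ht₀ : t₀ ∈ D₁ ∩ D₂) (h₀ : y t₀ = z t₀) :
    ∀ t ∈ D₁ ∩ D₂, y t = z t := by
  classical
  set U : Set (Fin m → ℝ) := {t | ∀ᶠ s in nhds t, y s = z s} with hUdef
  set V : Set (Fin m → ℝ) := {t | t ∈ D₁ ∩ D₂ ∧ y t ≠ z t} with hVdef
  have hUopen : IsOpen U := isOpen_setOf_eventually_nhds
  have hVopen : IsOpen V := by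
    rw [isOpen_iff_mem_nhds]
    rintro t ⟨⟨ht1, ht2⟩, hne⟩
    have hc : ContinuousAt (fun s => y s - z s) t :=
      ((hy t ht1).1.continuousAt).sub ((hz t ht2).1.continuousAt)
    have hne' : y t - z t ≠ 0 := sub_ne_zero_of_ne hne
    have h1 : ∀ᶠ s in nhds t, y s - z s ≠ 0 :=
      hc.eventually_ne hne'
    have h2 : ∀ᶠ s in nhds t, s ∈ D₁ ∩ D₂ :=
      (hD₁.inter hD₂).mem_nhds ⟨ht1, ht2⟩
    filter_upwards [h1, h2] with s hs1 hs2
    exact ⟨hs2, fun h => hs1 (by rw [h, sub_self])⟩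
  have hdisj : Disjoint U V := by
    rw [Set.disjoint_left]
    rintro t htU ⟨_, hne⟩
    exact hne htU.self_of_nhds
  have hsub : D₁ ∩ D₂ ⊆ U ∪ V := by
    intro t ht
    by_cases h : y t = z t
    · exact Or.inl (solutions_agree_local G hG X hX D₁ D₂ hD₁ hD₂ y z hy hz t ht h)
    · exact Or.inr ⟨ht, h⟩
  have hne : ((D₁ ∩ D₂) ∩ U).Nonempty :=
    ⟨t₀, ht₀, solutions_agree_local G hG X hX D₁ D₂ hD₁ hD₂ y z hy hz t₀ ht₀ h₀⟩
  have : D₁ ∩ D₂ ⊆ U :=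
    hconn.isPreconnected.subset_left_of_subset_union hUopen hVopen hdisj hsub hne
  intro t ht
  exact (this ht).self_of_nhds
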